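/- The addition graph G_+(A, B_1, ..., B_h) of finite sets A, B_1, ..., B_h in a commutative group is square commutative. -/

import Mathlib

open Pointwise Finset

/-- A hypercube graph indexed by the subsets of `{1, …, h}` (modelled as `Finset (Fin h)`):
a directed graph whose vertices carry an index set, with edges only adding one index. -/
structure HypercubeGraph (h : ℕ) (V : Type*) where
  verts : Finset V
  idx : V → Finset (Fin h)
  Edge : V → V → Prop
  edge_mem_left : ∀ u v, Edge u v → u ∈ verts
  edge_mem_right : ∀ u v, Edge u v → v ∈ verts
  edge_step : ∀ u v, Edge u v → ∃ i ∉ idx u, idx v = insert i (idx u)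

namespace HypercubeGraph

variable {h : ℕ} {V V₁ V₂ : Type*}

/-- `I → I'` in `Q_h`: `I'` is obtained from `I` by adding one index. -/
def Step (I I' : Finset (Fin h)) : Prop := ∃ i ∉ I, I' = insert i I

/-- Square commutativity: directed squares can be completed through the associate
index class `I ∪ (I'' \ I')`, with distinct intermediate vertices. -/
def SquareComm (G : HypercubeGraph h V) : Prop :=
  (∀ I I' I'' : Finset (Fin h), Step I I' → Step I' I'' →
    ∀ v v', G.idx v = I → G.idx v' = I' → G.Edge v v' →
    ∀ S : Finset V, (∀ w ∈ S, G.idx w = I'' ∧ G.Edge v' w) →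
    ∃ f : V → V, Set.InjOn f ↑S ∧
      ∀ w ∈ S, G.idx (f w) = I ∪ (I'' \ I') ∧ G.Edge v (f w) ∧ G.Edge (f w) w) ∧
  (∀ I I' I'' : Finset (Fin h), Step I I' → Step I' I'' →
    ∀ v' v'', G.idx v' = I' → G.idx v'' = I'' → G.Edge v' v'' →
    ∀ S : Finset V, (∀ w ∈ S, G.idx w = I ∧ G.Edge w v') →
    ∃ f : V → V, Set.InjOn f ↑S ∧
      ∀ w ∈ S, G.idx (f w) = I ∪ (I'' \ I') ∧ G.Edge w (f w) ∧ G.Edge (f w) v'')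

open Classical in
/-- The image of `Z` in the vertex class `U_I`: vertices of index `I` reachable from `Z`. -/
noncomputable def ImU (G : HypercubeGraph h V) (Z : Finset V) (I : Finset (Fin h)) : Finset V :=
  G.verts.filter fun v => G.idx v = I ∧ ∃ z ∈ Z, Relation.ReflTransGen G.Edge z v

open Classical in
/-- The image of `Z` in the `i`-th layer `V_i = ⊎_{|I| = i} U_I`. -/
noncomputable def ImL (G : HypercubeGraph h V) (Z : Finset V) (i : ℕ) : Finset V :=
  G.verts.filter fun v => (G.idx v).card = i ∧ ∃ z ∈ Z, Relation.ReflTransGen G.Edge z v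

open Classical in
/-- The bottom layer `V_0 = U_∅`. -/
noncomputable def bottom (G : HypercubeGraph h V) : Finset V :=
  G.verts.filter fun v => G.idx v = ∅

/-- The `i`-th magnification ratio `μ_i(G)`. -/
noncomputable def mu (G : HypercubeGraph h V) (i : ℕ) : ℝ :=
  sInf { r : ℝ | ∃ Z : Finset V, Z.Nonempty ∧ Z ⊆ G.bottom ∧
    r = ((G.ImL Z i).card : ℝ) / (Z.card : ℝ) }

/-- The hypercube product of two `Q_h`-hypercube graphs. -/
def prod (G₁ : HypercubeGraph h V₁) (G₂ : HypercubeGraph h V₂) :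
    HypercubeGraph h (V₁ × V₂) where
  verts := (G₁.verts ×ˢ G₂.verts).filter fun p => G₁.idx p.1 = G₂.idx p.2
  idx p := G₁.idx p.1
  Edge p q := G₁.idx p.1 = G₂.idx p.2 ∧ G₁.idx q.1 = G₂.idx q.2 ∧
    G₁.Edge p.1 q.1 ∧ G₂.Edge p.2 q.2
  edge_mem_left := by
    rintro p q ⟨h1, h2, h3, h4⟩
    simp only [Finset.mem_filter, Finset.mem_product]
    exact ⟨⟨G₁.edge_mem_left _ _ h3, G₂.edge_mem_left _ _ h4⟩, h1⟩
  edge_mem_right := by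
    rintro p q ⟨h1, h2, h3, h4⟩
    simp only [Finset.mem_filter, Finset.mem_product]
    exact ⟨⟨G₁.edge_mem_right _ _ h3, G₂.edge_mem_right _ _ h4⟩, h2⟩
  edge_step := by
    rintro p q ⟨h1, h2, h3, h4⟩
    exact G₁.edge_step _ _ h3

/-- Isomorphism of hypercube graphs: an index- and edge-preserving bijection on vertices. -/
def Isomorphic (G : HypercubeGraph h V₁) (G' : HypercubeGraph h V₂) : Prop :=
  ∃ f : V₁ → V₂, Set.BijOn f ↑G.verts ↑G'.verts ∧
    (∀ v ∈ G.verts, G'.idx (f v) = G.idx v) ∧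
    (∀ u v : V₁, G.Edge u v ↔ G'.Edge (f u) (f v))

end HypercubeGraph

/-- The addition graph `G₊(A, B₁, …, B_h)`: vertex classes `U_I = A + ∑_{i ∈ I} B_i`
(in disjoint copies of the group), with edges `x → x + b` for `b ∈ B_i`. -/
def additionGraph {G : Type*} [AddCommGroup G] [DecidableEq G] (h : ℕ)
    (A : Finset G) (B : Fin h → Finset G) :
    HypercubeGraph h (Finset (Fin h) × G) where
  verts := (Finset.univ : Finset (Finset (Fin h))).biUnion fun I =>
    (A + ∑ i ∈ I, B i).image fun x => (I, x)
  idx p := p.1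
  Edge p q := p.2 ∈ A + ∑ i ∈ p.1, B i ∧
    ∃ i ∉ p.1, q.1 = insert i p.1 ∧ ∃ b ∈ B i, q.2 = p.2 + b
  edge_mem_left := by
    rintro ⟨I, x⟩ ⟨J, y⟩ ⟨hx, i, hi, rfl, b, hb, rfl⟩
    simp only [Finset.mem_biUnion, Finset.mem_univ, Finset.mem_image, true_and]
    exact ⟨I, x, hx, rfl⟩
  edge_mem_right := by
    rintro ⟨I, x⟩ ⟨J, y⟩ ⟨hx, i, hi, rfl, b, hb, rfl⟩
    simp only [Finset.mem_biUnion, Finset.mem_univ, Finset.mem_image, true_and]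
    refine ⟨insert i I, x + b, ?_, rfl⟩
    rw [Finset.sum_insert hi]
    have : A + (B i + ∑ j ∈ I, B j) = (A + ∑ j ∈ I, B j) + B i := by
      rw [add_comm (B i), ← add_assoc]
    rw [this]
    exact Finset.add_mem_add hx hb
  edge_step := by
    rintro ⟨I, x⟩ ⟨J, y⟩ ⟨hx, i, hi, rfl, b, hb, rfl⟩
    exact ⟨i, hi, rfl⟩



private lemma addGraph_aux_mem {G : Type*} [AddCommGroup G] [DecidableEq G] {h : ℕ}
    {A : Finset G} {B : Fin h → Finset G} {I : Finset (Fin h)} {j : Fin h} (hj : j ∉ I)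
    {x c : G} (hx : x ∈ A + ∑ k ∈ I, B k) (hc : c ∈ B j) :
    x + c ∈ A + ∑ k ∈ insert j I, B k := by
  rw [Finset.sum_insert hj]
  have hrw : A + (B j + ∑ k ∈ I, B k) = (A + ∑ k ∈ I, B k) + B j := by
    rw [add_comm (B j), ← add_assoc]
  rw [hrw]
  exact Finset.add_mem_add hx hc

private lemma insert_eq_insert {α : Type*} [DecidableEq α] {s : Finset α} {a b : α}
    (ha : a ∉ s) (hb : b ∉ s) (hins : insert a s = insert b s) : a = b := by
  have : a ∈ insert b s := hins ▸ Finset.mem_insert_self a s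
  rcases Finset.mem_insert.1 this with h | h
  · exact h
  · exact absurd h ha

private lemma union_sdiff_insert {α : Type*} [DecidableEq α] {I I' : Finset α} {j : α}
    (hj : j ∉ I') (hII' : I ⊆ I') : I ∪ (insert j I' \ I') = insert j I := by
  have h1 : insert j I' \ I' = {j} := by
    ext a
    simp only [Finset.mem_sdiff, Finset.mem_insert, Finset.mem_singleton]
    constructor
    · rintro ⟨h | h, h2⟩
      · exact h
      · exact absurd h h2
    · rintro rfl
      exact ⟨Or.inl rfl, hj⟩
  rw [h1]
  ext a
  simp only [Finset.mem_union, Finset.mem_singleton, Finset.mem_insert]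
  tauto

/-- The addition graph of finite sets in a commutative group is square commutative. -/
theorem additionGraph_squareComm {G : Type*} [AddCommGroup G] [DecidableEq G]
    (h : ℕ) (A : Finset G) (B : Fin h → Finset G) :
    (additionGraph h A B).SquareComm := by
  constructor
  · -- up condition
    rintro I I' I'' ⟨i₀, hi₀, rfl⟩ ⟨j₀, hj₀, rfl⟩ ⟨Iv, x⟩ ⟨Iv', y⟩ hv hv' hE S hS
    simp only [additionGraph] at hv hv' hE ⊢
    obtain rfl : I = Iv := hv.symm
    obtain rfl : insert i₀ I = Iv' := hv'.symm
    obtain ⟨hx, i, hi, hins, b, hb, rfl⟩ := hE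
    obtain rfl : i₀ = i := insert_eq_insert hi₀ hi hins
    have hj₀I : j₀ ∉ I := fun hmem => hj₀ (Finset.mem_insert_of_mem hmem)
    refine ⟨fun p => (insert j₀ I, p.2 - (x + b) + x), ?_, ?_⟩
    · intro w₁ hw₁ w₂ hw₂ hfw
      have h1 := (hS w₁ hw₁).1
      have h2 := (hS w₂ hw₂).1
      have h3 : w₁.2 = w₂.2 := by
        have := congrArg Prod.snd hfw
        simpa using this
      exact Prod.ext (h1.trans h2.symm) h3
    · rintro ⟨Iw, xw⟩ hw
      obtain ⟨hwI, hy, j, hj, hwins, c, hc, hw2⟩ := hS _ hw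
      simp only [additionGraph] at hwI
      obtain rfl : insert j₀ (insert i₀ I) = Iw := hwI.symm
      obtain rfl : j₀ = j := insert_eq_insert hj₀ hj hwins
      have hfw2 : xw - (x + b) + x = x + c := by
        have : xw = x + b + c := hw2
        rw [this]; abel
      refine ⟨?_, ⟨hx, j₀, hj₀I, rfl, c, hc, hfw2⟩, ?_⟩
      · exact (union_sdiff_insert hj₀ (Finset.subset_insert i₀ I)).symm
      · refine ⟨?_, i₀, ?_, Finset.insert_comm _ _ _, b, hb, ?_⟩
        · show xw - (x + b) + x ∈ _
          rw [hfw2]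
          exact addGraph_aux_mem hj₀I hx hc
        · intro hmem
          rcases Finset.mem_insert.1 hmem with h1 | h1
          · exact hj₀ (h1 ▸ Finset.mem_insert_self i₀ I)
          · exact hi₀ h1
        · show xw = xw - (x + b) + x + b
          rw [hfw2]
          have hxw : xw = x + b + c := hw2
          rw [hxw]; abel
  · -- down condition
    rintro I I' I'' ⟨i₀, hi₀, rfl⟩ ⟨j₀, hj₀, rfl⟩ ⟨Iv', y⟩ ⟨Iv'', z⟩ hv' hv'' hE S hS
    simp only [additionGraph] at hv' hv'' hE ⊢
    obtain rfl : insert i₀ I = Iv' := hv'.symm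
    obtain rfl : insert j₀ (insert i₀ I) = Iv'' := hv''.symm
    obtain ⟨hy, j, hj, hins, c, hc, rfl⟩ := hE
    obtain rfl : j₀ = j := insert_eq_insert hj₀ hj hins
    have hj₀I : j₀ ∉ I := fun hmem => hj₀ (Finset.mem_insert_of_mem hmem)
    refine ⟨fun p => (insert j₀ I, p.2 + c), ?_, ?_⟩
    · intro w₁ hw₁ w₂ hw₂ hfw
      have h1 := (hS w₁ hw₁).1
      have h2 := (hS w₂ hw₂).1
      have h3 : w₁.2 = w₂.2 := by
        have := congrArg Prod.snd hfw
        simpa using this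
      exact Prod.ext (h1.trans h2.symm) h3
    · rintro ⟨Iw, xw⟩ hw
      obtain ⟨hwI, hwx, i, hi, hwins, b, hb, hy2⟩ := hS _ hw
      simp only [additionGraph] at hwI
      obtain rfl : I = Iw := hwI.symm
      obtain rfl : i₀ = i := insert_eq_insert hi₀ hi hwins
      refine ⟨(union_sdiff_insert hj₀ (Finset.subset_insert i₀ I)).symm,
        ⟨hwx, j₀, hj₀I, rfl, c, hc, rfl⟩, ?_⟩
      refine ⟨addGraph_aux_mem hj₀I hwx hc, i₀, ?_, Finset.insert_comm _ _ _, b, hb, ?_⟩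
      · intro hmem
        rcases Finset.mem_insert.1 hmem with h1 | h1
        · exact hj₀ (h1 ▸ Finset.mem_insert_self i₀ I)
        · exact hi₀ h1
      · have : y = xw + b := hy2
        rw [this]; dsimp only; abel
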